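/- Let $F$ be a real quadratic field, $v : F \to \mathbb{R}^2$ the embedding by the two real places, and $D$ the fundamental domain of the lattice $v(\mathcal{O}_F)$. Suppose there is a finite set $Z \subseteq \mathcal{CF}_2$ (length-2 continued fractions over $\mathcal{O}_F$) such that $D \subseteq \bigcup_{q \in Z} V(q)$, where $V(q) = \{x \in \mathbb{R}^2 : |\mathrm{Nm}(x - v(q))| < 1/|\mathrm{Nm}(q_2)|\}$ for $q = [q_1,q_2]$. Then every pair $\alpha, \beta \in \mathcal{O}_F$, $\beta \neq 0$, admits a 2-stage decreasing division chain; i.e., $F$ is 2-stage euclidean. -/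

import Mathlib

open Module NumberField

private lemma norm_eq_embed {F : Type*} [Field F] [NumberField F]
    (hdeg : finrank ℚ F = 2) (v1 v2 : F →+* ℝ) (hv : v1 ≠ v2) (x : F) :
    ((Algebra.norm ℚ x : ℚ) : ℝ) = v1 x * v2 x := by
  classical
  have h := Algebra.norm_eq_prod_embeddings ℚ ℂ (x := x)
  set σ1 : F →ₐ[ℚ] ℂ := (Complex.ofRealHom.comp v1).toRatAlgHom with hσ1
  set σ2 : F →ₐ[ℚ] ℂ := (Complex.ofRealHom.comp v2).toRatAlgHom with hσ2
  have happ1 : ∀ y, σ1 y = (v1 y : ℂ) := fun y => rfl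
  have happ2 : ∀ y, σ2 y = (v2 y : ℂ) := fun y => rfl
  have hne : σ1 ≠ σ2 := by
    intro hcon
    apply hv
    ext y
    have := DFunLike.congr_fun hcon y
    rw [happ1, happ2] at this
    exact_mod_cast this
  have hcard : Fintype.card (F →ₐ[ℚ] ℂ) = 2 := by
    rw [AlgHom.card]; exact hdeg
  have huniv : (Finset.univ : Finset (F →ₐ[ℚ] ℂ)) = {σ1, σ2} := by
    symm
    apply Finset.eq_univ_of_card
    rw [hcard, Finset.card_insert_of_notMem (by simpa using hne), Finset.card_singleton]
  rw [huniv, Finset.prod_insert (by simpa using hne), Finset.prod_singleton] at h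
  have : ((Algebra.norm ℚ x : ℚ) : ℂ) = ((v1 x * v2 x : ℝ) : ℂ) := by
    rw [show ((Algebra.norm ℚ x : ℚ) : ℂ) = algebraMap ℚ ℂ (Algebra.norm ℚ x) by norm_cast]
    rw [h, happ1, happ2]; push_cast; ring
  exact_mod_cast this

private lemma embed_ne_omega {F : Type*} [Field F] [NumberField F]
    (v1 v2 : F →+* ℝ) (hv : v1 ≠ v2)
    (B : Basis (Fin 2) ℤ (𝓞 F)) (hB : B 0 = 1) :
    v1 ((B 1 : 𝓞 F) : F) ≠ v2 ((B 1 : 𝓞 F) : F) := by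
  intro hcon
  apply hv
  apply IsLocalization.ringHom_ext (R := 𝓞 F) (S := F) (nonZeroDivisors (𝓞 F))
  ext y
  simp only [RingHom.comp_apply]
  have hy : y = B.repr y 0 • B 0 + B.repr y 1 • B 1 := by
    conv_lhs => rw [← B.sum_repr y]
    simp [Fin.sum_univ_two]
  rw [hy, hB]
  push_cast [zsmul_eq_mul]
  simp [map_add, map_mul, map_intCast, hcon]

/-- The hyperbolic region `V(q)` associated to a length-2 continued fraction
`q = q1 + 1/q2`, inside `ℝ²` via the two real embeddings `v1, v2`. -/
def hypRegion {F : Type*} [Field F] [NumberField F] (v1 v2 : F →+* ℝ)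
    (q : NumberField.RingOfIntegers F × NumberField.RingOfIntegers F) : Set (ℝ × ℝ) :=
  {x : ℝ × ℝ | |(x.1 - v1 ((q.1 : F) + 1 / (q.2 : F))) * (x.2 - v2 ((q.1 : F) + 1 / (q.2 : F)))| <
    1 / |(Algebra.norm ℚ (q.2 : F) : ℝ)|}

theorem stmt_17 (F : Type*) [Field F] [NumberField F]
    (hdeg : Module.finrank ℚ F = 2) (v1 v2 : F →+* ℝ) (hv : v1 ≠ v2)
    (B : Basis (Fin 2) ℤ (NumberField.RingOfIntegers F)) (hB : B 0 = 1)
    (D : Set (ℝ × ℝ))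
    (hD : D = {p | ∃ a b : ℝ, 0 ≤ a ∧ a < 1 ∧ 0 ≤ b ∧ b < 1 ∧
      p = a • ((1 : ℝ), (1 : ℝ)) + b • (v1 ((B 1 : NumberField.RingOfIntegers F) : F),
        v2 ((B 1 : NumberField.RingOfIntegers F) : F))})
    (Z : Finset (NumberField.RingOfIntegers F × NumberField.RingOfIntegers F))
    (hZ : ∀ q ∈ Z, q.2 ≠ 0)
    (hcover : D ⊆ ⋃ q ∈ Z, hypRegion v1 v2 q) :
    ∀ α β : NumberField.RingOfIntegers F, β ≠ 0 →
      (∃ q1 r1 : NumberField.RingOfIntegers F, α = q1 * β + r1 ∧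
        |Algebra.norm ℚ (r1 : F)| < |Algebra.norm ℚ (β : F)|) ∨
      (∃ q1 q2 r1 r2 : NumberField.RingOfIntegers F,
        α = q1 * β + r1 ∧ β = q2 * r1 + r2 ∧
        |Algebra.norm ℚ (r2 : F)| < |Algebra.norm ℚ (β : F)|) := by
  intro α β hβ
  right
  have hβF : (β : F) ≠ 0 := by
    simpa [RingOfIntegers.coe_eq_zero_iff] using hβ
  have hw : v1 ((B 1 : 𝓞 F) : F) ≠ v2 ((B 1 : 𝓞 F) : F) := embed_ne_omega v1 v2 hv B hB
  set ω : 𝓞 F := B 1 with hω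
  set w1 := v1 (ω : F) with hw1
  set w2 := v2 (ω : F) with hw2
  set x1 := v1 ((α : F) / (β : F)) with hx1
  set x2 := v2 ((α : F) / (β : F)) with hx2
  have ht : w2 - w1 ≠ 0 := sub_ne_zero.mpr (Ne.symm hw)
  set a := (x1 * w2 - x2 * w1) / (w2 - w1) with ha
  set b := (x2 - x1) / (w2 - w1) with hb
  have ha1 : a + b * w1 = x1 := by rw [ha, hb]; field_simp; ring
  have ha2 : a + b * w2 = x2 := by rw [ha, hb]; field_simp; ring
  set γ : 𝓞 F := (⌊a⌋ : ℤ) + (⌊b⌋ : ℤ) * ω with hγ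
  have hcast : ∀ n : ℤ, ((n : 𝓞 F) : F) = (n : F) := fun n => rfl
  have hγF : (γ : F) = (⌊a⌋ : F) + (⌊b⌋ : F) * (ω : F) := by
    rw [hγ]; push_cast [hcast]; ring
  have hγ1 : v1 (γ : F) = (⌊a⌋ : ℝ) + (⌊b⌋ : ℝ) * w1 := by
    rw [hγF]; simp only [map_add, map_mul, map_intCast, hw1]
  have hγ2 : v2 (γ : F) = (⌊a⌋ : ℝ) + (⌊b⌋ : ℝ) * w2 := by
    rw [hγF]; simp only [map_add, map_mul, map_intCast, hw2]
  have hd : ((Int.fract a + Int.fract b * w1, Int.fract a + Int.fract b * w2) : ℝ × ℝ) ∈ D := by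
    rw [hD]
    refine ⟨Int.fract a, Int.fract b, Int.fract_nonneg a, Int.fract_lt_one a,
      Int.fract_nonneg b, Int.fract_lt_one b, ?_⟩
    simp [Prod.ext_iff, smul_eq_mul]
  have hmem := hcover hd
  simp only [Set.mem_iUnion] at hmem
  obtain ⟨q, hqZ, hq⟩ := hmem
  have hq2 : q.2 ≠ 0 := hZ q hqZ
  have hq2F : (q.2 : F) ≠ 0 := by simpa [RingOfIntegers.coe_eq_zero_iff] using hq2
  set r1 : 𝓞 F := α - (γ + q.1) * β with hr1
  set r2 : 𝓞 F := β - q.2 * r1 with hr2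
  set Qf : F := (q.1 : F) + 1 / (q.2 : F) with hQf
  have he : (α : F) / (β : F) - ((γ : F) + Qf) = -(r2 : F) / ((β : F) * (q.2 : F)) := by
    rw [hQf, hr2, hr1]
    push_cast
    field_simp
    ring
  have hd1 : Int.fract a + Int.fract b * w1 - v1 Qf
      = v1 ((α : F) / (β : F) - ((γ : F) + Qf)) := by
    have h1 : v1 ((α : F) / (β : F) - ((γ : F) + Qf)) = x1 - (v1 (γ : F) + v1 Qf) := by
      rw [map_sub, map_add, hx1]
    rw [h1, hγ1, Int.fract, Int.fract, ← ha1]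
    ring
  have hd2 : Int.fract a + Int.fract b * w2 - v2 Qf
      = v2 ((α : F) / (β : F) - ((γ : F) + Qf)) := by
    have h1 : v2 ((α : F) / (β : F) - ((γ : F) + Qf)) = x2 - (v2 (γ : F) + v2 Qf) := by
      rw [map_sub, map_add, hx2]
    rw [h1, hγ2, Int.fract, Int.fract, ← ha2]
    ring
  have hreg : |(v1 ((α : F) / (β : F) - ((γ : F) + Qf)))
      * (v2 ((α : F) / (β : F) - ((γ : F) + Qf)))|
      < 1 / |((Algebra.norm ℚ (q.2 : F) : ℚ) : ℝ)| := by
    have := hq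
    simp only [hypRegion, Set.mem_setOf_eq] at this
    rw [← hQf] at this
    simpa [hd1, hd2] using this
  rw [he] at hreg
  have hv1β : v1 (β : F) ≠ 0 := (map_ne_zero v1).mpr hβF
  have hv2β : v2 (β : F) ≠ 0 := (map_ne_zero v2).mpr hβF
  have hv1q : v1 (q.2 : F) ≠ 0 := (map_ne_zero v1).mpr hq2F
  have hv2q : v2 (q.2 : F) ≠ 0 := (map_ne_zero v2).mpr hq2F
  have hcomp : v1 (-(r2 : F) / ((β : F) * (q.2 : F))) * v2 (-(r2 : F) / ((β : F) * (q.2 : F)))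
      = ((Algebra.norm ℚ (r2 : F) : ℚ) : ℝ)
        / (((Algebra.norm ℚ (β : F) : ℚ) : ℝ) * ((Algebra.norm ℚ (q.2 : F) : ℚ) : ℝ)) := by
    rw [norm_eq_embed hdeg v1 v2 hv, norm_eq_embed hdeg v1 v2 hv, norm_eq_embed hdeg v1 v2 hv]
    rw [map_div₀, map_div₀, map_neg, map_neg, map_mul, map_mul,
      div_mul_div_comm, neg_mul_neg]
    congr 1
    ring
  rw [hcomp] at hreg
  have hnβ : ((Algebra.norm ℚ (β : F) : ℚ) : ℝ) ≠ 0 := by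
    exact_mod_cast (Algebra.norm_ne_zero_iff).mpr hβF
  have hnq : ((Algebra.norm ℚ (q.2 : F) : ℚ) : ℝ) ≠ 0 := by
    exact_mod_cast (Algebra.norm_ne_zero_iff).mpr hq2F
  have hposβ : 0 < |((Algebra.norm ℚ (β : F) : ℚ) : ℝ)| := abs_pos.mpr hnβ
  have hposq : 0 < |((Algebra.norm ℚ (q.2 : F) : ℚ) : ℝ)| := abs_pos.mpr hnq
  rw [abs_div, abs_mul] at hreg
  rw [div_lt_div_iff₀ (by positivity) hposq] at hreg
  have hfinal : |((Algebra.norm ℚ (r2 : F) : ℚ) : ℝ)| < |((Algebra.norm ℚ (β : F) : ℚ) : ℝ)| := by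
    have := hreg
    rw [one_mul] at this
    nlinarith [abs_nonneg ((Algebra.norm ℚ (r2 : F) : ℚ) : ℝ)]
  refine ⟨γ + q.1, q.2, r1, r2, by rw [hr1]; ring, by rw [hr2]; ring, ?_⟩
  exact_mod_cast hfinal
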